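/- Let (W, 𝒞) be a convex geometry and K ⊆ W a finite subset. Then for every X ⊆ W: ex(K) ⊆ X if and only if K ⊆ co(K ∩ X). -/

import Mathlib

open Set

def interClosed {W : Type*} (𝒞 : Set (Set W)) : Prop := ∀ 𝒳 ⊆ 𝒞, ⋂₀ 𝒳 ∈ 𝒞

def antiExchange {W : Type*} (𝒞 : Set (Set W)) : Prop :=
  ∀ C ∈ 𝒞, ∀ x y : W, x ∉ C → y ∉ C → x ≠ y →
    ∃ D ∈ 𝒞, C ⊆ D ∧ ((x ∈ D ∧ y ∉ D) ∨ (x ∉ D ∧ y ∈ D))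

def hullOf {W : Type*} (𝒞 : Set (Set W)) (X : Set W) : Set W := ⋂₀ {C | C ∈ 𝒞 ∧ X ⊆ C}

def exOf {W : Type*} (𝒞 : Set (Set W)) (X : Set W) : Set W :=
  {x | x ∈ X ∧ x ∉ hullOf 𝒞 (X \ {x})}

namespace CGaux

variable {W : Type*} {𝒞 : Set (Set W)}

lemma subset_hull (X : Set W) : X ⊆ hullOf 𝒞 X := by
  intro x hx C hC
  exact hC.2 hx

lemma hull_mem (hI : interClosed 𝒞) (X : Set W) : hullOf 𝒞 X ∈ 𝒞 :=
  hI _ (fun C hC => hC.1)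

lemma hull_min {C : Set W} (hC : C ∈ 𝒞) {X : Set W} (hXC : X ⊆ C) :
    hullOf 𝒞 X ⊆ C := fun _ hx => hx C ⟨hC, hXC⟩

lemma hull_mono {X Y : Set W} (h : X ⊆ Y) : hullOf 𝒞 X ⊆ hullOf 𝒞 Y := by
  intro x hx C hC
  exact hx C ⟨hC.1, h.trans hC.2⟩

lemma hull_le_hull (hI : interClosed 𝒞) {X Y : Set W} (h : X ⊆ hullOf 𝒞 Y) :
    hullOf 𝒞 X ⊆ hullOf 𝒞 Y := hull_min (hull_mem hI Y) h

/-- Standard form of anti-exchange derived from the separation form. -/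
lemma ae_standard (hI : interClosed 𝒞) (hAE : antiExchange 𝒞)
    {C : Set W} (hC : C ∈ 𝒞) {x y : W} (hx : x ∉ C) (hy : y ∉ C) (hxy : x ≠ y)
    (h1 : x ∈ hullOf 𝒞 (C ∪ {y})) (h2 : y ∈ hullOf 𝒞 (C ∪ {x})) : False := by
  obtain ⟨D, hD, hCD, hcase⟩ := hAE C hC x y hx hy hxy
  rcases hcase with ⟨hxD, hyD⟩ | ⟨hxD, hyD⟩
  · exact hyD (hull_min hD (union_subset hCD (by simpa using hxD)) h2)
  · exact hxD (hull_min hD (union_subset hCD (by simpa using hyD)) h1)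

/-- Key lemma (Krein–Milman for convex geometries): a finite set is contained
in the hull of its extreme points. -/
lemma key (hI : interClosed 𝒞) (hAE : antiExchange 𝒞) :
    ∀ n : ℕ, ∀ K : Set W, K.Finite → K.ncard = n → K ⊆ hullOf 𝒞 (exOf 𝒞 K) := by
  intro n
  induction n using Nat.strong_induction_on with
  | _ n ih =>
    intro K hK hcard
    by_cases hall : ∀ y ∈ K, y ∈ exOf 𝒞 K
    · exact fun x hx => subset_hull _ (hall x hx)
    · push_neg at hall
      obtain ⟨y, hyK, hyne⟩ := hall
      have hyhull : y ∈ hullOf 𝒞 (K \ {y}) := by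
        by_contra h; exact hyne ⟨hyK, h⟩
      set K' := K \ {y} with hK'
      have hK'fin : K'.Finite := hK.diff
      have hK'card : K'.ncard < n := by
        rw [← hcard]
        exact Set.ncard_lt_ncard (sdiff_singleton_ssubset.mpr hyK) hK
      have hK'sub : K' ⊆ hullOf 𝒞 (exOf 𝒞 K') :=
        ih _ hK'card K' hK'fin rfl
      -- extreme points of K' are extreme points of K
      have hexsub : exOf 𝒞 K' ⊆ exOf 𝒞 K := by
        rintro x ⟨hxK', hxne⟩
        refine ⟨hxK'.1, fun hxhull => ?_⟩
        have hxy : x ≠ y := hxK'.2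
        set C := hullOf 𝒞 (K' \ {x}) with hCdef
        have hCmem : C ∈ 𝒞 := hull_mem hI _
        have hxC : x ∉ C := hxne
        have hyC : y ∉ C := by
          intro hyC
          apply hxne
          have : K \ {x} ⊆ C := by
            intro z hz
            rcases eq_or_ne z y with rfl | hzy
            · exact hyC
            · exact subset_hull _ ⟨⟨hz.1, hzy⟩, hz.2⟩
          exact hull_min hCmem this hxhull
        have h1 : x ∈ hullOf 𝒞 (C ∪ {y}) := by
          refine hull_mono ?_ hxhull
          intro z hz
          rcases eq_or_ne z y with rfl | hzy
          · exact Or.inr rfl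
          · exact Or.inl (subset_hull _ ⟨⟨hz.1, hzy⟩, hz.2⟩)
        have h2 : y ∈ hullOf 𝒞 (C ∪ {x}) := by
          have : K' ⊆ C ∪ {x} := by
            intro z hz
            rcases eq_or_ne z x with rfl | hzx
            · exact Or.inr rfl
            · exact Or.inl (subset_hull _ ⟨hz, hzx⟩)
          exact hull_mono this hyhull
        exact ae_standard hI hAE hCmem hxC hyC hxy h1 h2
      have hsub2 : hullOf 𝒞 (exOf 𝒞 K') ⊆ hullOf 𝒞 (exOf 𝒞 K) :=
        hull_mono hexsub
      intro x hx
      rcases eq_or_ne x y with rfl | hxy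
      · exact hull_le_hull hI (hK'sub.trans hsub2) hyhull
      · exact hsub2 (hK'sub ⟨hx, hxy⟩)

end CGaux

theorem extreme_subset_iff_hull {W : Type*} (𝒞 : Set (Set W))
    (hI : interClosed 𝒞) (hAE : antiExchange 𝒞) (K : Set W) (hK : K.Finite) :
    ∀ X : Set W, exOf 𝒞 K ⊆ X ↔ K ⊆ hullOf 𝒞 (K ∩ X) := by
  intro X
  constructor
  · intro hX
    have h1 : K ⊆ hullOf 𝒞 (exOf 𝒞 K) := CGaux.key hI hAE K.ncard K hK rfl
    have h2 : exOf 𝒞 K ⊆ K ∩ X := fun x hx => ⟨hx.1, hX hx⟩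
    exact h1.trans (CGaux.hull_mono h2)
  · intro h x hx
    by_contra hxX
    apply hx.2
    have : K ∩ X ⊆ K \ {x} := by
      rintro z ⟨hzK, hzX⟩
      exact ⟨hzK, fun hzx => hxX (hzx ▸ hzX)⟩
    exact CGaux.hull_mono this (h hx.1)
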